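/- Let $D$ be a $(v,k,\lambda)$ difference set in a finite group $G$ of order $v$ with $\gcd(v, \lambda) = 1$. Then for every non-identity $x \in G$, the only element $g \in G$ satisfying $Dg \cap Dxg = D \cap Dx$ is $g = 1$. -/

import Mathlib

open scoped Classical

theorem stmt_2 {G : Type*} [Group G] [Fintype G] (v k lam : ℕ)
    (D : Finset G)
    (hv : Fintype.card G = v) (hk : D.card = k)
    (hDS : ∀ w : G, w ≠ 1 → (D ∩ D.image (· * w)).card = lam)
    (hgcd : Nat.gcd v lam = 1) :
    ∀ x : G, x ≠ 1 → ∀ g : G,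
      D.image (· * g) ∩ D.image (· * (x * g)) = D ∩ D.image (· * x) → g = 1 := by
  intro x hx g hEq
  set S : Finset G := D ∩ D.image (· * x) with hSdef
  have hinj : Function.Injective (· * g) := fun a b h => by
    simpa using mul_right_cancel h
  -- S is stable under right multiplication by g
  have hS : S.image (· * g) = S := by
    rw [hSdef, Finset.image_inter _ _ hinj, Finset.image_image]
    have h1 : ((· * g) ∘ (· * x) : G → G) = (· * (x * g)) := by
      funext a; simp [Function.comp, mul_assoc]
    rw [h1, hEq]
  have hfwd : ∀ a ∈ S, a * g ∈ S := by
    intro a ha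
    rw [← hS]
    exact Finset.mem_image_of_mem _ ha
  have hbwd : ∀ a ∈ S, a * g⁻¹ ∈ S := by
    intro a ha
    rw [← hS] at ha
    obtain ⟨b, hb, hba⟩ := Finset.mem_image.mp ha
    simpa [← hba, mul_assoc] using hb
  have hclaim : ∀ a ∈ S, ∀ m : ℤ, a * g ^ m ∈ S := by
    intro a ha m
    induction m using Int.induction_on with
    | zero => simpa using ha
    | succ n ih =>
        have := hfwd _ ih
        simpa [zpow_add, mul_assoc] using this
    | pred n ih =>
        have := hbwd _ ih
        simpa [zpow_sub, mul_assoc] using this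
  -- orderOf g divides lam
  set H := Subgroup.zpowers g with hHdef
  have hcard : S.card = (S.image (QuotientGroup.mk (s := H))).card * orderOf g := by
    rw [Finset.card_eq_sum_card_fiberwise
      (f := QuotientGroup.mk (s := H)) (fun a ha => Finset.mem_image_of_mem _ ha)]
    rw [Finset.sum_congr rfl (fun q hq => ?_), Finset.sum_const, smul_eq_mul]
    obtain ⟨a, haS, haq⟩ := Finset.mem_image.mp hq
    have hfiber : S.filter (fun b => QuotientGroup.mk (s := H) b = q)
        = Finset.image (fun h : H => a * (h : G)) Finset.univ := by
      ext b
      simp only [Finset.mem_filter, Finset.mem_image, Finset.mem_univ, true_and]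
      constructor
      · rintro ⟨hbS, hbq⟩
        have : QuotientGroup.mk (s := H) b = QuotientGroup.mk a := by rw [hbq, haq]
        have hmem : b⁻¹ * a ∈ H := QuotientGroup.eq.mp this
        refine ⟨⟨(b⁻¹ * a)⁻¹, H.inv_mem hmem⟩, ?_⟩
        simp
      · rintro ⟨⟨h, hh⟩, rfl⟩
        obtain ⟨m, rfl⟩ := hh
        refine ⟨hclaim a haS m, ?_⟩
        rw [← haq]
        exact QuotientGroup.eq.mpr (Subgroup.mem_zpowers_iff.mpr ⟨-m, by group⟩)
    rw [hfiber, Finset.card_image_of_injective _ (fun h₁ h₂ hh => by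
      exact Subtype.ext (mul_left_cancel hh)), Finset.card_univ]
    exact Fintype.card_zpowers
  have hlam : orderOf g ∣ lam := by
    rw [← hDS x hx, ← hSdef, hcard]
    exact dvd_mul_left _ _
  have hvdvd : orderOf g ∣ v := hv ▸ orderOf_dvd_card
  have : orderOf g ∣ 1 := hgcd ▸ Nat.dvd_gcd hvdvd hlam
  exact orderOf_eq_one_iff.mp (Nat.eq_one_of_dvd_one this)
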